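/- arXiv:2605.09654 — 4 statements merged into one kernel-verified Lean document; each statement's English description precedes it below -/
import Mathlib

section
/- Under the setting of the Poisson product estimator, taking L = log r for some r > 0 with |log r| ≤ C, we have exp(C)·E[W] = r, i.e., exp(C)·W is an unbiased estimator of the density ratio r. -/
open MeasureTheory ProbabilityTheory

lemma indep_integral_prod_range {Ω : Type*} [MeasurableSpace Ω] {μ : Measure Ω}
    [IsProbabilityMeasure μ] {Y : ℕ → Ω → ℝ} (hmeas : ∀ j, Measurable (Y j))
    (hint : ∀ j, Integrable (Y j) μ)
    (hind : iIndepFun Y μ) (n : ℕ) :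
    Integrable (∏ j ∈ Finset.range n, Y j) μ ∧
      ∫ ω, ∏ j ∈ Finset.range n, Y j ω ∂μ = ∏ j ∈ Finset.range n, ∫ ω, Y j ω ∂μ := by
  induction n with
  | zero => simpa [Pi.one_def] using (integrable_const (1 : ℝ))
  | succ n ih =>
    have hI : IndepFun (∏ j ∈ Finset.range n, Y j) (Y n) μ :=
      hind.indepFun_finset_prod_of_notMem hmeas (Finset.notMem_range_self)
    have hint' : Integrable ((∏ j ∈ Finset.range n, Y j) * Y n) μ :=
      hI.integrable_mul ih.1 (hint n)
    simp only [Finset.prod_range_succ]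
    refine ⟨hint', ?_⟩
    have h1 : (fun ω => (∏ j ∈ Finset.range n, Y j ω) * Y n ω)
        = (∏ j ∈ Finset.range n, Y j) * Y n := by
      funext ω; simp [Finset.prod_apply]
    calc ∫ ω, (∏ j ∈ Finset.range n, Y j ω) * Y n ω ∂μ
        = ∫ ω, ((∏ j ∈ Finset.range n, Y j) * Y n) ω ∂μ := by rw [h1]
      _ = (∫ ω, (∏ j ∈ Finset.range n, Y j) ω ∂μ) * ∫ ω, Y n ω ∂μ :=
          hI.integral_mul_eq_mul_integral ih.1.aestronglyMeasurable (hint n).aestronglyMeasurable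
      _ = _ := by
          congr 1
          rw [← ih.2]
          congr 1
          funext ω
          simp [Finset.prod_apply]

/-- Unbiasedness of the scaled Poisson product estimator: with `L = log r`, `0 < r`,
`|log r| ≤ C`, and `W = ∏_{j < N} (1/2 + Iⱼ/(2C))` for `N ~ Poisson(2C)` independent of
the i.i.d. `Iⱼ` with `|Iⱼ| ≤ C` a.s. and `E[Iⱼ] = log r`, we have `exp C · E[W] = r`. -/
theorem poisson_product_estimator_unbiased_ratio
    {Ω : Type*} [MeasurableSpace Ω] (μ : Measure Ω) [IsProbabilityMeasure μ]
    (C r : ℝ) (hC : 0 < C) (hr : 0 < r) (hlogr : |Real.log r| ≤ C)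
    (I : ℕ → Ω → ℝ) (N : Ω → ℕ)
    (hImeas : ∀ j, Measurable (I j)) (hNmeas : Measurable N)
    -- the `Iⱼ` have a common distribution
    (hIdent : ∀ j, Measure.map (I j) μ = Measure.map (I 0) μ)
    -- the `Iⱼ` and `N` are jointly independent
    (hIndep : iIndepFun
      (fun j : ℕ => Nat.rec (motive := fun _ => Ω → ℝ) (fun ω => (N ω : ℝ)) (fun k _ => I k) j) μ)
    (hbound : ∀ j, ∀ᵐ ω ∂μ, |I j ω| ≤ C)
    (hmean : ∀ j, ∫ ω, I j ω ∂μ = Real.log r)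
    -- `N ~ Poisson(2C)`
    (hN : ∀ k : ℕ, μ {ω | N ω = k} =
      ENNReal.ofReal (Real.exp (-(2 * C)) * (2 * C) ^ k / (Nat.factorial k)))
    (W : Ω → ℝ)
    (hW : ∀ ω, W ω = ∏ j ∈ Finset.range (N ω), (1 / 2 + I j ω / (2 * C))) :
    Real.exp C * ∫ ω, W ω ∂μ = r := by
  have hC2 : (0:ℝ) < 2 * C := by linarith
  obtain ⟨m, hm⟩ : ∃ m : ℝ, m = 1 / 2 + Real.log r / (2 * C) := ⟨_, rfl⟩
  set X : ℕ → Ω → ℝ :=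
    fun j : ℕ => Nat.rec (motive := fun _ => Ω → ℝ) (fun ω => (N ω : ℝ)) (fun k _ => I k) j
    with hX
  -- integrability of the I j
  have hIint : ∀ j, Integrable (I j) μ := by
    intro j
    refine Integrable.mono' (integrable_const C) (hImeas j).aestronglyMeasurable ?_
    filter_upwards [hbound j] with ω hω
    simpa [Real.norm_eq_abs] using hω
  -- measurability of W
  have hWmeas : Measurable W := by
    have h1 : Measurable fun p : Ω × ℕ =>
        ∏ j ∈ Finset.range p.2, (1 / 2 + I j p.1 / (2 * C)) := by
      apply measurable_from_prod_countable_left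
      intro k
      show Measurable fun x : Ω => ∏ j ∈ Finset.range k, (1 / 2 + I j x / (2 * C))
      exact Finset.measurable_prod _ fun j _ =>
        (measurable_const.add ((hImeas j).div_const _))
    have : W = (fun p : Ω × ℕ => ∏ j ∈ Finset.range p.2, (1 / 2 + I j p.1 / (2 * C))) ∘
        fun ω => (ω, N ω) := by
      funext ω; simp [hW ω]
    rw [this]
    exact h1.comp (measurable_id.prodMk hNmeas)
  -- a.e. bound on W
  have hWbdd : ∀ᵐ ω ∂μ, ‖W ω‖ ≤ 1 := by
    have hall : ∀ᵐ ω ∂μ, ∀ j, |I j ω| ≤ C := (ae_all_iff).2 hbound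
    filter_upwards [hall] with ω hω
    rw [Real.norm_eq_abs, hW ω, Finset.abs_prod]
    refine Finset.prod_le_one (fun j _ => abs_nonneg _) (fun j _ => ?_)
    have := hω j
    calc |1 / 2 + I j ω / (2 * C)| ≤ |1 / 2| + |I j ω / (2 * C)| := abs_add_le _ _
      _ = 1 / 2 + |I j ω| / (2 * C) := by
          congr 1
          · norm_num
          · rw [abs_div, abs_of_pos hC2]
      _ ≤ 1 / 2 + C / (2 * C) := by gcongr
      _ = 1 := by field_simp; ring
  have hWint : Integrable W μ :=
    Integrable.mono' (integrable_const 1) hWmeas.aestronglyMeasurable hWbdd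
  -- the sets {N = k}
  set s : ℕ → Set Ω := fun k => {ω | N ω = k} with hs
  have hsm : ∀ k, MeasurableSet (s k) := fun k => hNmeas (measurableSet_singleton k)
  have hsd : Pairwise (Function.onFun Disjoint s) := by
    intro i j hij
    simp only [Function.onFun, Set.disjoint_left]
    rintro ω (hi : N ω = i) (hj : N ω = j)
    exact hij (hi ▸ hj ▸ rfl)
  have hsU : (⋃ k, s k) = Set.univ := by
    ext ω; simp [hs]
  -- per-k computation
  have hkey : ∀ k : ℕ, ∫ ω in s k, W ω ∂μ =
      (Real.exp (-(2 * C)) * (2 * C) ^ k / (Nat.factorial k)) * m ^ k := by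
    intro k
    -- the auxiliary independent family
    set g : ℕ → ℝ → ℝ := fun j => match j with
      | 0 => fun x => if x = (k : ℝ) then (1:ℝ) else 0
      | _+1 => fun x => 1 / 2 + x / (2 * C)
      with hg
    have hgmeas : ∀ j, Measurable (g j) := by
      rintro (_ | j)
      · exact measurable_const.ite (measurableSet_eq) measurable_const
      · exact measurable_const.add (measurable_id.div_const _)
    set Y : ℕ → Ω → ℝ := fun j => g j ∘ X j with hY
    have hYind : iIndepFun Y μ := hIndep.comp g hgmeas
    have hXmeas : ∀ j, Measurable (X j) := by
      rintro (_ | j)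
      · exact measurable_from_top.comp hNmeas
      · exact hImeas j
    have hYmeas : ∀ j, Measurable (Y j) := fun j => (hgmeas j).comp (hXmeas j)
    have hY0 : ∀ ω, Y 0 ω = if N ω = k then (1:ℝ) else 0 := by
      intro ω
      show (if (N ω : ℝ) = (k : ℝ) then (1:ℝ) else 0) = _
      simp [Nat.cast_inj]
    have hYs : ∀ j ω, Y (j + 1) ω = 1 / 2 + I j ω / (2 * C) := fun j ω => rfl
    have hYint : ∀ j, Integrable (Y j) μ := by
      rintro (_ | j)
      · refine Integrable.mono' (integrable_const 1) (hYmeas 0).aestronglyMeasurable ?_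
        refine Filter.Eventually.of_forall fun ω => ?_
        rw [hY0 ω]
        split <;> simp
      · have : Y (j+1) = fun ω => 1 / 2 + I j ω / (2 * C) := funext fun ω => hYs j ω
        rw [this]
        exact (integrable_const _).add ((hIint j).div_const _)
    -- integrals of Y j
    have hIY0 : ∫ ω, Y 0 ω ∂μ = (μ (s k)).toReal := by
      have : (fun ω => Y 0 ω) = (s k).indicator (fun _ => (1:ℝ)) := by
        funext ω
        rw [hY0 ω, Set.indicator_apply]
        rfl
      rw [this, integral_indicator_const (1:ℝ) (hsm k)]
      simp [Measure.real]
    have hIYs : ∀ j, ∫ ω, Y (j + 1) ω ∂μ = m := by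
      intro j
      have : (fun ω => Y (j+1) ω) = fun ω => 1 / 2 + I j ω / (2 * C) :=
        funext fun ω => hYs j ω
      rw [this, integral_add (integrable_const _) ((hIint j).div_const _), hm]
      simp [integral_div, hmean j]
    -- product formula
    have hprod : ∀ ω, (∏ j ∈ Finset.range (k + 1), Y j ω) =
        (if N ω = k then (1:ℝ) else 0) * ∏ j ∈ Finset.range k, (1 / 2 + I j ω / (2 * C)) := by
      intro ω
      rw [Finset.prod_range_succ' (fun j => Y j ω), hY0 ω, mul_comm]
      exact congrArg _ (Finset.prod_congr rfl fun j _ => hYs j ω)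
    -- set integral = integral of the product
    have h1 : ∫ ω in s k, W ω ∂μ = ∫ ω, ∏ j ∈ Finset.range (k + 1), Y j ω ∂μ := by
      have h2 : ∫ ω in s k, W ω ∂μ
          = ∫ ω in s k, ∏ j ∈ Finset.range k, (1 / 2 + I j ω / (2 * C)) ∂μ := by
        refine setIntegral_congr_fun (hsm k) fun ω hω => ?_
        rw [hW ω]
        have : N ω = k := hω
        rw [this]
      rw [h2, ← integral_indicator (hsm k)]
      congr 1
      funext ω
      rw [hprod ω, Set.indicator_apply]
      by_cases hωk : N ω = k
      · simp [hωk, hs]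
      · simp [hωk, hs]
    rw [h1, (indep_integral_prod_range hYmeas hYint hYind (k+1)).2,
      Finset.prod_range_succ' (fun j => ∫ ω, Y j ω ∂μ), hIY0]
    have : ∏ j ∈ Finset.range k, ∫ ω, Y (j + 1) ω ∂μ = m ^ k := by
      rw [Finset.prod_congr rfl fun j _ => hIYs j, Finset.prod_const, Finset.card_range]
    rw [this, hN k, ENNReal.toReal_ofReal (by positivity)]
    ring
  -- decompose the integral
  have hdecomp : ∫ ω, W ω ∂μ = ∑' k, ∫ ω in s k, W ω ∂μ := by
    rw [← setIntegral_univ (f := W) (μ := μ), ← hsU,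
      integral_iUnion hsm hsd (hWint.integrableOn)]
  rw [hdecomp]
  have hterm : ∀ k : ℕ, ∫ ω in s k, W ω ∂μ =
      Real.exp (-(2 * C)) * ((2 * C * m) ^ k / (Nat.factorial k)) := by
    intro k
    rw [hkey k, mul_pow]
    ring
  rw [tsum_congr hterm, tsum_mul_left]
  have hexp : ∑' k : ℕ, (2 * C * m) ^ k / (Nat.factorial k) = Real.exp (2 * C * m) := by
    rw [Real.exp_eq_exp_ℝ, NormedSpace.exp_eq_tsum_div]
  rw [hexp]
  have h2Cm : 2 * C * m = C + Real.log r := by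
    rw [hm]; field_simp
  rw [h2Cm, ← Real.exp_add, ← Real.exp_add]
  have : C + (-(2 * C) + (C + Real.log r)) = Real.log r := by ring
  rw [this, Real.exp_log hr]
end

section
/- In the two-coin algorithm with per-round reject probability α' = (1 + H e^C)^{-1} and per-round accept probability (1 − α') e^{-C} r, the overall probability of eventually returning ACCEPT equals the Barker acceptance probability Hr/(1 + Hr). -/
open MeasureTheory ProbabilityTheory
open scoped ENNReal

/-- The two-coin algorithm returns ACCEPT with the Barker probability `H r / (1 + H r)`.
Each round independently returns REJECT (outcome `0`) with probability
`α' = (1 + H e^C)⁻¹`, ACCEPT (outcome `1`) with probability `(1 - α') e^{-C} r`, and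
otherwise RESTART (outcome `2`). The event of eventually accepting is that some round
returns ACCEPT while all previous rounds returned RESTART. -/
theorem two_coin_barker_acceptance_probability
    {Ω : Type*} [MeasurableSpace Ω] (μ : Measure Ω) [IsProbabilityMeasure μ]
    (H C r : ℝ) (hH : 0 < H) (hC : 0 ≤ C) (hr : 0 < r) (hrC : r ≤ Real.exp C)
    (α' : ℝ) (hα' : α' = (1 + H * Real.exp C)⁻¹)
    (X : ℕ → Ω → Fin 3) (hXmeas : ∀ n, Measurable (X n))
    (hIndep : iIndepFun X μ)
    (hreject : ∀ n, μ {ω | X n ω = 0} = ENNReal.ofReal α')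
    (haccept : ∀ n, μ {ω | X n ω = 1} = ENNReal.ofReal ((1 - α') * (Real.exp (-C) * r))) :
    μ {ω | ∃ n, X n ω = 1 ∧ ∀ m < n, X m ω = 2} =
      ENNReal.ofReal (H * r / (1 + H * r)) := by
  have hE : (0:ℝ) < Real.exp C := Real.exp_pos C
  set a : ℝ := (1 - α') * (Real.exp (-C) * r) with ha
  set q : ℝ := 1 - α' - a with hq
  have hα'pos : 0 < α' := by rw [hα']; positivity
  have hα'lt : α' < 1 := by
    rw [hα']
    rw [inv_lt_one_iff₀]
    right; nlinarith
  have hapos : 0 < a := by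
    have : 0 < Real.exp (-C) := Real.exp_pos _
    have h1 : 0 < 1 - α' := by linarith
    positivity
  have haα' : a ≤ 1 - α' := by
    have h1 : Real.exp (-C) * r ≤ 1 := by
      have h2 : Real.exp (-C) * r ≤ Real.exp (-C) * Real.exp C :=
        mul_le_mul_of_nonneg_left hrC (Real.exp_pos _).le
      rwa [← Real.exp_add, neg_add_cancel, Real.exp_zero] at h2
    nlinarith [hα'pos.le, hα'lt.le]
  have hq0 : 0 ≤ q := by simp only [hq]; linarith
  have hq1 : q < 1 := by simp only [hq]; linarith
  have h1q : 1 - q = α' + a := by simp only [hq]; ring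
  -- per-round restart probability
  have hrestart : ∀ n, μ {ω | X n ω = 2} = ENNReal.ofReal q := by
    intro n
    have hset : {ω | X n ω = 2} = ({ω | X n ω = 0} ∪ {ω | X n ω = 1})ᶜ := by
      ext ω
      simp only [Set.mem_setOf_eq, Set.mem_compl_iff, Set.mem_union]
      constructor
      · intro h; rw [h]; decide
      · intro h
        have hall : ∀ x : Fin 3, ¬(x = 0 ∨ x = 1) → x = 2 := by decide
        exact hall _ h
    have hm0 : MeasurableSet {ω | X n ω = 0} := (hXmeas n) (measurableSet_singleton 0)
    have hm1 : MeasurableSet {ω | X n ω = 1} := (hXmeas n) (measurableSet_singleton 1)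
    have hdisj : Disjoint {ω | X n ω = 0} {ω | X n ω = 1} := by
      rw [Set.disjoint_left]; intro ω h0 h1
      simp only [Set.mem_setOf_eq] at h0 h1
      rw [h0] at h1; exact absurd h1 (by decide)
    rw [hset, measure_compl (hm0.union hm1) (measure_ne_top μ _),
      measure_union hdisj hm1, hreject n, haccept n, measure_univ,
      ← ENNReal.ofReal_add hα'pos.le hapos.le]
    rw [show (1:ℝ≥0∞) = ENNReal.ofReal 1 by simp,
      ← ENNReal.ofReal_sub _ (by linarith : (0:ℝ) ≤ α' + a)]
    congr 1
    simp only [hq]; ring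
  -- decompose the event
  set A : ℕ → Set Ω := fun n => {ω | X n ω = 1 ∧ ∀ m < n, X m ω = 2} with hA
  have hEvent : {ω | ∃ n, X n ω = 1 ∧ ∀ m < n, X m ω = 2} = ⋃ n, A n := by
    ext ω; simp [hA]
  have hAmeas : ∀ n, MeasurableSet (A n) := by
    intro n
    have heq : A n = (X n ⁻¹' {1}) ∩ ⋂ m ∈ {m | m < n}, X m ⁻¹' {2} := by
      ext ω; simp [hA]
    rw [heq]
    exact ((hXmeas n) (measurableSet_singleton 1)).inter
      (MeasurableSet.biInter (Set.to_countable _)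
        fun m _ => (hXmeas m) (measurableSet_singleton 2))
  have hAdisj : Pairwise (Function.onFun Disjoint A) := by
    intro i j hij
    rw [Function.onFun, Set.disjoint_left]
    intro ω hi hj
    rcases lt_or_gt_of_ne hij with h | h
    · have := hj.2 i h
      have := hi.1
      simp_all
    · have := hi.2 j h
      have := hj.1
      simp_all
  -- measure of each A n via independence
  have hAn : ∀ n, μ (A n) = (ENNReal.ofReal q) ^ n * ENNReal.ofReal a := by
    intro n
    set sets : ℕ → Set (Fin 3) := fun m => if m < n then {2} else {1} with hsets
    have hAeq : A n = ⋂ m ∈ Finset.range (n + 1), X m ⁻¹' sets m := by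
      ext ω
      simp only [hA, Set.mem_setOf_eq, Set.mem_iInter, Set.mem_preimage, hsets,
        Finset.mem_range]
      constructor
      · rintro ⟨h1, h2⟩ m hm
        by_cases hmn : m < n
        · simp [hmn, h2 m hmn]
        · have : m = n := by omega
          simp [this, h1]
      · intro h
        constructor
        · have := h n (by omega); simpa using this
        · intro m hm
          have := h m (by omega); simpa [hm] using this
    rw [hAeq, hIndep.measure_inter_preimage_eq_mul _
      (fun i _ => by by_cases h : i < n <;> simp [hsets, h])]
    rw [Finset.prod_range_succ]
    have hlast : μ (X n ⁻¹' sets n) = ENNReal.ofReal a := by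
      simp only [hsets, lt_irrefl, if_false]
      rw [← haccept n]; rfl
    have hprev : ∀ m ∈ Finset.range n, μ (X m ⁻¹' sets m) = ENNReal.ofReal q := by
      intro m hm
      rw [Finset.mem_range] at hm
      simp only [hsets, hm, if_true]
      rw [← hrestart m]; rfl
    rw [hlast, Finset.prod_congr rfl hprev, Finset.prod_const, Finset.card_range]
  rw [hEvent, measure_iUnion hAdisj hAmeas]
  simp_rw [hAn]
  rw [ENNReal.tsum_mul_right, ENNReal.tsum_geometric]
  have : (1 : ℝ≥0∞) - ENNReal.ofReal q = ENNReal.ofReal (1 - q) := by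
    rw [show (1:ℝ≥0∞) = ENNReal.ofReal 1 by simp, ← ENNReal.ofReal_sub _ hq0]
  rw [this, ← ENNReal.div_eq_inv_mul, ← ENNReal.ofReal_div_of_pos (by linarith)]
  congr 1
  rw [h1q]
  have hHE : 1 + H * Real.exp C ≠ 0 := by positivity
  rw [ha, hα', Real.exp_neg]
  have hden : H * Real.exp C * r + Real.exp C ≠ 0 := by positivity
  field_simp
  ring_nf
  field_simp
  ring
end

section
/- In the two-coin algorithm, let N_i be the number of score evaluations in round i, where N_i = 0 if round i returns REJECT (probability α') and N_i ~ Poisson(2C) otherwise. Then E[N₁] = 2C H e^C/(1 + H e^C), and the expected total number of score evaluations before termination equals 2C H e^C/(1 + H r). -/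
open MeasureTheory ProbabilityTheory

open scoped ENNReal


lemma my_summable_poisson (l : ℝ) : Summable (fun k : ℕ => (k : ℝ) * (l ^ k / k.factorial)) := by
  rw [← summable_nat_add_iff 1]
  have h : (fun k : ℕ => ((k + 1 : ℕ) : ℝ) * (l ^ (k+1) / (k+1).factorial))
      = fun k : ℕ => l * (l ^ k / k.factorial) := by
    funext k
    rw [Nat.factorial_succ]
    push_cast
    field_simp
    ring
  rw [h]
  exact (Real.summable_pow_div_factorial l).mul_left l

lemma my_tsum_poisson (l : ℝ) : ∑' k : ℕ, (k : ℝ) * (l ^ k / k.factorial) = l * Real.exp l := by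
  rw [Summable.tsum_eq_zero_add (my_summable_poisson l)]
  have h : (fun k : ℕ => ((k + 1 : ℕ) : ℝ) * (l ^ (k+1) / (k+1).factorial))
      = fun k : ℕ => l * (l ^ k / k.factorial) := by
    funext k
    rw [Nat.factorial_succ]
    push_cast
    field_simp
    ring
  simp only [h, Nat.cast_zero, zero_mul, zero_add]
  rw [tsum_mul_left]
  congr 1
  rw [Real.exp_eq_exp_ℝ, NormedSpace.exp_eq_tsum_div]

lemma my_lintegral_natCast {Ω : Type*} [MeasurableSpace Ω] (μ : Measure Ω) (f : Ω → ℕ)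
    (hf : Measurable f) :
    ∫⁻ ω, (f ω : ℝ≥0∞) ∂μ = ∑' k : ℕ, (k : ℝ≥0∞) * μ (f ⁻¹' {k}) := by
  have h : ∫⁻ ω, (f ω : ℝ≥0∞) ∂μ = ∫⁻ n, (n : ℝ≥0∞) ∂(Measure.map f μ) := by
    rw [lintegral_map measurable_from_top hf]
  rw [h, lintegral_countable']
  exact tsum_congr fun k => by rw [Measure.map_apply hf (measurableSet_singleton k)]

lemma my_sum_ite {n m : ℕ} (h : m ≤ n) (u : ℕ → ℝ) :
    ∑ i ∈ Finset.range n, (if i < m then u i else 0) = ∑ i ∈ Finset.range m, u i := by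
  rw [← Finset.sum_filter]
  congr 1
  ext i
  simp only [Finset.mem_filter, Finset.mem_range]
  omega

/-- Expected number of score queries of the two-coin algorithm. In round `i` the outcome
`X i` is REJECT (`0`) with probability `α' = (1 + H e^C)⁻¹`, ACCEPT (`1`) with probability
`(1 - α') e^{-C} r`, RESTART (`2`) otherwise; the number of score evaluations `N i` is `0`
on a reject and is `Poisson(2C)`-distributed on the complement; rounds are i.i.d. Then
`E[N₁] = 2C H e^C / (1 + H e^C)`, and the expected total number of score evaluations up to
the termination round `K` equals `2C H e^C / (1 + H r)`. -/
theorem two_coin_expected_score_queries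
    {Ω : Type*} [MeasurableSpace Ω] (μ : Measure Ω) [IsProbabilityMeasure μ]
    (H C r : ℝ) (hH : 0 < H) (hC : 0 ≤ C) (hr : 0 < r) (hrC : r ≤ Real.exp C)
    (α' : ℝ) (hα' : α' = (1 + H * Real.exp C)⁻¹)
    (X : ℕ → Ω → Fin 3) (N : ℕ → Ω → ℕ)
    (hXmeas : ∀ i, Measurable (X i)) (hNmeas : ∀ i, Measurable (N i))
    -- the rounds `(X i, N i)` are jointly independent
    (hIndep : iIndepFun (fun i ω => (X i ω, N i ω)) μ)
    -- and identically distributed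
    (hIdent : ∀ i, Measure.map (fun ω => (X i ω, N i ω)) μ =
      Measure.map (fun ω => (X 0 ω, N 0 ω)) μ)
    (hreject : ∀ i, μ {ω | X i ω = 0} = ENNReal.ofReal α')
    (haccept : ∀ i, μ {ω | X i ω = 1} = ENNReal.ofReal ((1 - α') * (Real.exp (-C) * r)))
    -- no score evaluations on an immediate reject
    (hNreject : ∀ i, ∀ᵐ ω ∂μ, X i ω = 0 → N i ω = 0)
    -- otherwise the number of score evaluations is Poisson(2C)
    (hNpois : ∀ i, ∀ k : ℕ, μ {ω | X i ω ≠ 0 ∧ N i ω = k} =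
      ENNReal.ofReal ((1 - α') *
        (Real.exp (-(2 * C)) * (2 * C) ^ k / (Nat.factorial k))))
    (K : Ω → ℕ) (hK : ∀ ω, K ω = sInf {n | X n ω ≠ 2} + 1) :
    (∫ ω, (N 0 ω : ℝ) ∂μ = 2 * C * H * Real.exp C / (1 + H * Real.exp C)) ∧
    (∫ ω, (∑ i ∈ Finset.range (K ω), (N i ω : ℝ)) ∂μ =
      2 * C * H * Real.exp C / (1 + H * r)) := by
  have hE : 0 < Real.exp C := Real.exp_pos C
  set e : ℝ := Real.exp C with he
  have hA : (0:ℝ) < 1 + H * e := by positivity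
  have hα0 : 0 < α' := by rw [hα']; positivity
  have hα1 : α' ≤ 1 := by
    rw [hα']
    rw [inv_le_one_iff₀]
    right
    nlinarith
  have h1α : 1 - α' = H * e / (1 + H * e) := by
    rw [hα']
    field_simp
    ring
  have h1α0 : 0 ≤ 1 - α' := by linarith
  -- the acceptance probability and restart probability
  set acc : ℝ := (1 - α') * (Real.exp (-C) * r) with hacc
  have hacc0 : 0 ≤ acc := by
    have : 0 < Real.exp (-C) := Real.exp_pos _
    positivity
  set q : ℝ := 1 - α' - acc with hqdef
  have hq0 : 0 ≤ q := by
    have hle : Real.exp (-C) * r ≤ 1 := by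
      rw [Real.exp_neg]
      exact inv_mul_le_one_of_le₀ hrC (le_of_lt hE)
    have : acc ≤ 1 - α' := by
      calc acc = (1 - α') * (Real.exp (-C) * r) := rfl
        _ ≤ (1 - α') * 1 := by apply mul_le_mul_of_nonneg_left hle h1α0
        _ = 1 - α' := mul_one _
    linarith
  have hq1 : q < 1 := by
    simp only [hqdef]
    linarith
  have hpair : ∀ i, Measurable (fun ω => (X i ω, N i ω)) :=
    fun i => (hXmeas i).prodMk (hNmeas i)
  -- the restart probability of each round
  have hfin3 : ∀ x : Fin 3, x = 2 ↔ ¬(x = 0 ∨ x = 1) := by decide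
  have hq : ∀ i, μ {ω | X i ω = 2} = ENNReal.ofReal q := by
    intro i
    have hset : {ω | X i ω = 2} = ({ω | X i ω = 0} ∪ {ω | X i ω = 1})ᶜ := by
      ext ω
      simp only [Set.mem_setOf_eq, Set.mem_compl_iff, Set.mem_union]
      exact hfin3 (X i ω)
    have hm0 : MeasurableSet {ω | X i ω = 0} := (hXmeas i) (measurableSet_singleton 0)
    have hm1 : MeasurableSet {ω | X i ω = 1} := (hXmeas i) (measurableSet_singleton 1)
    have hdisj : Disjoint {ω | X i ω = 0} {ω | X i ω = 1} := by
      rw [Set.disjoint_left]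
      intro ω h0 h1
      simp only [Set.mem_setOf_eq] at h0 h1
      rw [h0] at h1
      exact absurd h1 (by decide)
    have hunion : μ ({ω | X i ω = 0} ∪ {ω | X i ω = 1}) = ENNReal.ofReal (α' + acc) := by
      rw [measure_union hdisj hm1, hreject i, haccept i, ← ENNReal.ofReal_add hα0.le hacc0]
    rw [hset, measure_compl (hm0.union hm1) (measure_ne_top μ _), hunion, measure_univ]
    rw [← ENNReal.ofReal_one, ← ENNReal.ofReal_sub _ (by linarith)]
    congr 1
    simp only [hqdef]
    ring
  -- Part 1 in lintegral form
  have hN0eq : ∀ k : ℕ, k ≠ 0 → μ {ω | N 0 ω = k} =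
      ENNReal.ofReal ((1 - α') * (Real.exp (-(2 * C)) * (2 * C) ^ k / (Nat.factorial k))) := by
    intro k hk
    have hnull : μ {ω | X 0 ω = 0 ∧ N 0 ω = k} = 0 := by
      have h := hNreject 0
      rw [ae_iff] at h
      refine measure_mono_null ?_ h
      intro ω hω
      simp only [Set.mem_setOf_eq] at hω ⊢
      intro himp
      exact hk (hω.2 ▸ himp hω.1)
    have hsplit : {ω | N 0 ω = k} = {ω | X 0 ω ≠ 0 ∧ N 0 ω = k} ∪ {ω | X 0 ω = 0 ∧ N 0 ω = k} := by
      ext ω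
      by_cases h : X 0 ω = 0 <;> simp [h]
    rw [hsplit]
    refine le_antisymm ?_ ?_
    · calc μ ({ω | X 0 ω ≠ 0 ∧ N 0 ω = k} ∪ {ω | X 0 ω = 0 ∧ N 0 ω = k})
          ≤ μ {ω | X 0 ω ≠ 0 ∧ N 0 ω = k} + μ {ω | X 0 ω = 0 ∧ N 0 ω = k} := measure_union_le _ _
        _ = ENNReal.ofReal ((1 - α') * (Real.exp (-(2 * C)) * (2 * C) ^ k / (Nat.factorial k))) := by
            rw [hnull, add_zero, hNpois 0 k]
    · rw [← hNpois 0 k]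
      exact measure_mono Set.subset_union_left
  have hm : ∫⁻ ω, (N 0 ω : ℝ≥0∞) ∂μ = ENNReal.ofReal (2 * C * (1 - α')) := by
    rw [my_lintegral_natCast μ (N 0) (hNmeas 0)]
    have hterm : ∀ k : ℕ, (k : ℝ≥0∞) * μ ((N 0) ⁻¹' {k}) =
        ENNReal.ofReal ((k : ℝ) * ((1 - α') * (Real.exp (-(2 * C)) * (2 * C) ^ k / (Nat.factorial k)))) := by
      intro k
      rcases Nat.eq_zero_or_pos k with hk | hk
      · subst hk; simp
      · have : (N 0) ⁻¹' {k} = {ω | N 0 ω = k} := rfl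
        rw [this, hN0eq k hk.ne', ← ENNReal.ofReal_natCast k,
          ← ENNReal.ofReal_mul (Nat.cast_nonneg k)]
    rw [tsum_congr hterm]
    have hnonneg : ∀ k : ℕ, 0 ≤ (k : ℝ) * ((1 - α') * (Real.exp (-(2 * C)) * (2 * C) ^ k / (Nat.factorial k))) := by
      intro k
      have h2C : (0:ℝ) ≤ 2 * C := by linarith
      have := Real.exp_pos (-(2*C))
      positivity
    have hfun : (fun k : ℕ => (k : ℝ) * ((1 - α') * (Real.exp (-(2 * C)) * (2 * C) ^ k / (Nat.factorial k))))
        = fun k : ℕ => ((1 - α') * Real.exp (-(2 * C))) * ((k : ℝ) * ((2*C) ^ k / (Nat.factorial k))) := by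
      funext k
      ring
    have hsummable : Summable (fun k : ℕ => (k : ℝ) * ((1 - α') * (Real.exp (-(2 * C)) * (2 * C) ^ k / (Nat.factorial k)))) := by
      rw [hfun]
      exact (my_summable_poisson (2*C)).mul_left _
    rw [← ENNReal.ofReal_tsum_of_nonneg hnonneg hsummable]
    congr 1
    rw [hfun, tsum_mul_left, my_tsum_poisson (2*C)]
    have : Real.exp (-(2*C)) * Real.exp (2*C) = 1 := by
      rw [← Real.exp_add]; simp
    calc (1 - α') * Real.exp (-(2 * C)) * (2 * C * Real.exp (2 * C))
        = 2 * C * (1 - α') * (Real.exp (-(2*C)) * Real.exp (2*C)) := by ring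
      _ = 2 * C * (1 - α') := by rw [this, mul_one]
  have hlintN : ∀ i, ∫⁻ ω, (N i ω : ℝ≥0∞) ∂μ = ENNReal.ofReal (2 * C * (1 - α')) := by
    intro i
    have hf2 : Measurable (fun p : Fin 3 × ℕ => ((p.2 : ℕ) : ℝ≥0∞)) :=
      measurable_from_top.comp measurable_snd
    have h1 : ∫⁻ ω, (N i ω : ℝ≥0∞) ∂μ
        = ∫⁻ p : Fin 3 × ℕ, ((p.2 : ℕ) : ℝ≥0∞) ∂(Measure.map (fun ω => (X i ω, N i ω)) μ) := by
      rw [lintegral_map hf2 (hpair i)]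
    rw [h1, hIdent i, lintegral_map hf2 (hpair 0)]
    exact hm
  have hm0 : (0:ℝ) ≤ 2 * C * (1 - α') := by
    have : (0:ℝ) ≤ 2 * C := by linarith
    exact mul_nonneg this h1α0
  have hpart1 : ∫ ω, (N 0 ω : ℝ) ∂μ = 2 * C * (1 - α') := by
    rw [integral_eq_lintegral_of_nonneg_ae (Filter.Eventually.of_forall fun ω => Nat.cast_nonneg _)
      (measurable_from_top.comp (hNmeas 0)).aestronglyMeasurable]
    have hcast : ∀ ω, ENNReal.ofReal ((N 0 ω : ℝ)) = ((N 0 ω : ℕ) : ℝ≥0∞) :=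
      fun ω => ENNReal.ofReal_natCast _
    rw [lintegral_congr hcast, hm, ENNReal.toReal_ofReal hm0]
  -- the events of surviving the first i rounds
  set B : ℕ → Set Ω := fun i => ⋂ j ∈ Finset.range i, {ω | X j ω = 2} with hB
  have hBmem : ∀ i ω, ω ∈ B i ↔ ∀ j < i, X j ω = 2 := by
    intro i ω
    simp only [hB, Set.mem_iInter, Finset.mem_range, Set.mem_setOf_eq]
  have hBmeas : ∀ i, MeasurableSet (B i) := by
    intro i
    exact MeasurableSet.biInter (Finset.range i).countable_toSet
      fun j _ => (hXmeas j) (measurableSet_singleton 2)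
  have hBmeasure : ∀ i, μ (B i) = (ENNReal.ofReal q) ^ i := by
    intro i
    have hmem : ∀ j ∈ Finset.range i,
        MeasurableSet[MeasurableSpace.comap (fun ω => (X j ω, N j ω)) inferInstance]
          {ω | X j ω = 2} := by
      intro j _
      refine ⟨({2} : Set (Fin 3)) ×ˢ Set.univ,
        (measurableSet_singleton 2).prod MeasurableSet.univ, ?_⟩
      ext ω; simp [eq_comm]
    have h := hIndep.meas_biInter hmem
    rw [hB]
    simp only []
    rw [h, Finset.prod_congr rfl (fun j _ => hq j), Finset.prod_const, Finset.card_range]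
  set Z : Set Ω := ⋂ n, {ω | X n ω = 2} with hZ
  have hZsub : ∀ i, Z ⊆ B i := by
    intro i ω hω
    rw [hBmem]
    intro j _
    exact Set.mem_iInter.1 hω j
  have hofq1 : ENNReal.ofReal q < 1 := by
    rw [← ENNReal.ofReal_one]
    exact ENNReal.ofReal_lt_ofReal_iff_of_nonneg hq0 |>.2 hq1
  have hZ0 : μ Z = 0 := by
    have hle : ∀ i, μ Z ≤ (ENNReal.ofReal q) ^ i :=
      fun i => (hBmeasure i) ▸ measure_mono (hZsub i)
    have htend : Filter.Tendsto (fun i : ℕ => (ENNReal.ofReal q) ^ i) Filter.atTop (nhds 0) :=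
      ENNReal.tendsto_pow_atTop_nhds_zero_of_lt_one hofq1
    exact le_antisymm (ge_of_tendsto' htend hle) (zero_le)
  have hZc : ∀ᵐ ω ∂μ, ω ∉ Z := by
    rw [ae_iff]
    simpa using hZ0
  have hAB : ∀ ω, ω ∉ Z → ∀ i, (i < K ω ↔ ω ∈ B i) := by
    intro ω hω i
    have hne : {n | X n ω ≠ 2}.Nonempty := by
      by_contra hc
      rw [Set.not_nonempty_iff_eq_empty] at hc
      apply hω
      refine Set.mem_iInter.2 fun n => ?_
      by_contra hn
      have hmem : n ∈ {n | X n ω ≠ 2} := hn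
      rw [hc] at hmem
      exact hmem
    rw [hK, hBmem]
    constructor
    · intro h j hj
      by_contra hjne
      have hjS : j ∈ {n | X n ω ≠ 2} := hjne
      have := Nat.sInf_le hjS
      omega
    · intro h
      have hmem := Nat.sInf_mem hne
      have hni : ¬ sInf {n | X n ω ≠ 2} < i := fun hlt => hmem (h _ hlt)
      omega
  -- key independence computation
  have hInd : ∀ i, ∫⁻ ω, Set.indicator (B i) (fun ω => ((N i ω : ℕ) : ℝ≥0∞)) ω ∂μ
      = (ENNReal.ofReal q) ^ i * ENNReal.ofReal (2 * C * (1 - α')) := by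
    intro i
    set h : Ω → ℕ := (B i).indicator (N i) with hh
    have hhmeas : Measurable h := (hNmeas i).indicator (hBmeas i)
    have hcast : ∀ ω, Set.indicator (B i) (fun ω => ((N i ω : ℕ) : ℝ≥0∞)) ω = ((h ω : ℕ) : ℝ≥0∞) := by
      intro ω
      by_cases hω : ω ∈ B i <;>
        simp [hh, Set.indicator_of_mem, Set.indicator_of_notMem, hω]
    have hkey : ∀ k : ℕ, k ≠ 0 → μ (h ⁻¹' {k}) = (ENNReal.ofReal q) ^ i * μ {ω | N i ω = k} := by
      intro k hk
      have hpre : h ⁻¹' {k} = B i ∩ {ω | N i ω = k} := by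
        ext ω
        simp only [Set.mem_preimage, Set.mem_singleton_iff, Set.mem_inter_iff, Set.mem_setOf_eq, hh]
        by_cases hω : ω ∈ B i
        · simp [Set.indicator_of_mem hω, hω]
        · simp [Set.indicator_of_notMem hω, hω, Ne.symm hk]
      set s : ℕ → Set Ω := fun j => if j = i then {ω | N i ω = k} else {ω | X j ω = 2} with hs
      have hmem : ∀ j ∈ Finset.range (i+1),
          MeasurableSet[MeasurableSpace.comap (fun ω => (X j ω, N j ω)) inferInstance] (s j) := by
        intro j _
        by_cases hji : j = i
        · subst hji
          refine ⟨Set.univ ×ˢ ({k} : Set ℕ),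
            MeasurableSet.univ.prod (measurableSet_singleton k), ?_⟩
          ext ω
          simp only [hs, Set.mem_preimage, Set.mem_prod, Set.mem_univ, true_and,
            Set.mem_singleton_iff, if_pos rfl, Set.mem_setOf_eq]
        · refine ⟨({2} : Set (Fin 3)) ×ˢ Set.univ,
            (measurableSet_singleton 2).prod MeasurableSet.univ, ?_⟩
          ext ω
          simp only [hs, Set.mem_preimage, Set.mem_prod, Set.mem_univ, and_true,
            Set.mem_singleton_iff, if_neg hji, Set.mem_setOf_eq]
      have hinter : B i ∩ {ω | N i ω = k} = ⋂ j ∈ Finset.range (i+1), s j := by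
        ext ω
        simp only [Set.mem_inter_iff, hBmem, Set.mem_iInter, Finset.mem_range, Set.mem_setOf_eq, hs]
        constructor
        · rintro ⟨h1, h2⟩ j hj
          by_cases hji : j = i
          · subst hji; simpa using h2
          · have : j < i := by omega
            simp only [if_neg hji]
            exact h1 j this
        · intro hall
          constructor
          · intro j hj
            have := hall j (by omega)
            rw [if_neg (Nat.ne_of_lt hj)] at this
            exact this
          · have := hall i (by omega)
            simpa using this
      rw [hpre, hinter, hIndep.meas_biInter hmem, Finset.prod_range_succ]
      have h1 : ∀ j ∈ Finset.range i, μ (s j) = ENNReal.ofReal q := by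
        intro j hj
        rw [Finset.mem_range] at hj
        simp only [hs, if_neg (Nat.ne_of_lt hj)]
        exact hq j
      rw [Finset.prod_congr rfl h1, Finset.prod_const, Finset.card_range]
      simp [hs]
    calc ∫⁻ ω, Set.indicator (B i) (fun ω => ((N i ω : ℕ) : ℝ≥0∞)) ω ∂μ
        = ∫⁻ ω, ((h ω : ℕ) : ℝ≥0∞) ∂μ := lintegral_congr hcast
      _ = ∑' k : ℕ, (k : ℝ≥0∞) * μ (h ⁻¹' {k}) := my_lintegral_natCast μ h hhmeas
      _ = ∑' k : ℕ, (ENNReal.ofReal q) ^ i * ((k : ℝ≥0∞) * μ {ω | N i ω = k}) := by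
          refine tsum_congr fun k => ?_
          rcases Nat.eq_zero_or_pos k with hk | hk
          · subst hk; simp
          · rw [hkey k hk.ne']
            ring
      _ = (ENNReal.ofReal q) ^ i * ∑' k : ℕ, (k : ℝ≥0∞) * μ {ω | N i ω = k} :=
          ENNReal.tsum_mul_left
      _ = (ENNReal.ofReal q) ^ i * ENNReal.ofReal (2 * C * (1 - α')) := by
          congr 1
          have : ∑' k : ℕ, (k : ℝ≥0∞) * μ {ω | N i ω = k}
              = ∫⁻ ω, (N i ω : ℝ≥0∞) ∂μ := (my_lintegral_natCast μ (N i) (hNmeas i)).symm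
          rw [this, hlintN i]
  -- the total count and its measurability
  set f : Ω → ℝ := fun ω => ∑ i ∈ Finset.range (K ω), (N i ω : ℝ) with hf
  have hfnonneg : ∀ ω, 0 ≤ f ω := fun ω => Finset.sum_nonneg fun i _ => Nat.cast_nonneg _
  set g : ℕ → Ω → ℝ :=
    fun n ω => ∑ i ∈ Finset.range n, Set.indicator (B i) (fun ω => (N i ω : ℝ)) ω with hg
  have hgmeas : ∀ n, Measurable (g n) := by
    intro n
    apply Finset.measurable_sum
    intro i _
    exact (measurable_from_top.comp (hNmeas i)).indicator (hBmeas i)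
  have hconv : ∀ᵐ ω ∂μ, Filter.Tendsto (fun n => g n ω) Filter.atTop (nhds (f ω)) := by
    filter_upwards [hZc] with ω hω
    apply Filter.Tendsto.congr' _ tendsto_const_nhds
    rw [Filter.EventuallyEq, Filter.eventually_atTop]
    refine ⟨K ω, fun n hn => ?_⟩
    have hind : ∀ i, Set.indicator (B i) (fun ω => (N i ω : ℝ)) ω
        = if i < K ω then (N i ω : ℝ) else 0 := by
      intro i
      by_cases hi : ω ∈ B i
      · rw [Set.indicator_of_mem hi, if_pos ((hAB ω hω i).2 hi)]
      · rw [Set.indicator_of_notMem hi, if_neg (fun hc => hi ((hAB ω hω i).1 hc))]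
    rw [hf, hg]
    simp only []
    rw [Finset.sum_congr rfl fun i _ => hind i]
    exact (my_sum_ite hn _).symm
  have hfmeas : AEStronglyMeasurable f μ :=
    aestronglyMeasurable_of_tendsto_ae Filter.atTop
      (fun n => (hgmeas n).aestronglyMeasurable) hconv
  -- the lebesgue integral of the total count
  have hlin : ∫⁻ ω, ENNReal.ofReal (f ω) ∂μ
      = (1 - ENNReal.ofReal q)⁻¹ * ENNReal.ofReal (2 * C * (1 - α')) := by
    have hcongr : ∀ᵐ ω ∂μ, ENNReal.ofReal (f ω)
        = ∑' i, Set.indicator (B i) (fun ω => ((N i ω : ℕ) : ℝ≥0∞)) ω := by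
      filter_upwards [hZc] with ω hω
      have h1 : ∑' i, Set.indicator (B i) (fun ω => ((N i ω : ℕ) : ℝ≥0∞)) ω
          = ∑ i ∈ Finset.range (K ω), Set.indicator (B i) (fun ω => ((N i ω : ℕ) : ℝ≥0∞)) ω :=
        tsum_eq_sum (fun i hi => Set.indicator_of_notMem
          (fun hBi => hi (Finset.mem_range.2 ((hAB ω hω i).2 hBi))) _)
      rw [h1, hf]
      simp only []
      rw [ENNReal.ofReal_sum_of_nonneg (fun i _ => Nat.cast_nonneg _)]
      refine Finset.sum_congr rfl fun i hi => ?_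
      rw [Set.indicator_of_mem ((hAB ω hω i).1 (Finset.mem_range.1 hi)), ENNReal.ofReal_natCast]
    have hameas : ∀ i, AEMeasurable
        (fun ω => Set.indicator (B i) (fun ω => ((N i ω : ℕ) : ℝ≥0∞)) ω) μ := fun i =>
      ((measurable_from_top.comp (hNmeas i)).indicator (hBmeas i)).aemeasurable
    rw [lintegral_congr_ae hcongr, lintegral_tsum hameas,
      tsum_congr hInd, ENNReal.tsum_mul_right, ENNReal.tsum_geometric]
  have h1q : (0:ℝ) < 1 - q := by linarith
  have hconst : ((1 - ENNReal.ofReal q)⁻¹ * ENNReal.ofReal (2 * C * (1 - α'))).toReal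
      = (1 - q)⁻¹ * (2 * C * (1 - α')) := by
    have h1 : 1 - ENNReal.ofReal q = ENNReal.ofReal (1 - q) := by
      rw [ENNReal.ofReal_sub _ hq0, ENNReal.ofReal_one]
    rw [h1, ← ENNReal.ofReal_inv_of_pos h1q, ← ENNReal.ofReal_mul (by positivity)]
    exact ENNReal.toReal_ofReal (by positivity)
  have hone_q : 1 - q = (1 + H * r) / (1 + H * e) := by
    have hee : Real.exp (-C) = e⁻¹ := Real.exp_neg C
    simp only [hqdef, hacc, h1α, hee]
    field_simp
    ring
  constructor
  · rw [hpart1, h1α]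
    ring
  · rw [integral_eq_lintegral_of_nonneg_ae (Filter.Eventually.of_forall hfnonneg) hfmeas,
      hlin, hconst, hone_q, h1α]
    have hBr : (0:ℝ) < 1 + H * r := by positivity
    field_simp
end

section
/- Let f : [0,1] → ℝ be four times continuously differentiable. Then the Simpson's 1/3 rule error satisfies ∫₀¹ f(u) du − (1/6)(f(0) + 4 f(1/2) + f(1)) = −f⁗(u*)/2880 for some u* ∈ [0,1]. -/
open intervalIntegral

open Set in
/-- Simpson's 1/3 rule error on `[0,1]`: if `f` is four times continuously differentiable
on `[0,1]`, then there exists `u* ∈ [0,1]` with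
`∫₀¹ f - (1/6)(f 0 + 4 f (1/2) + f 1) = - f⁗(u*) / 2880`. -/
theorem simpsons_rule_error
    (f : ℝ → ℝ) (hf : ContDiffOn ℝ 4 f (Set.Icc 0 1)) :
    ∃ u' ∈ Set.Icc (0:ℝ) 1,
      (∫ u in (0:ℝ)..1, f u) - (1 / 6) * (f 0 + 4 * f (1 / 2) + f 1) =
        -(iteratedDerivWithin 4 f (Set.Icc 0 1) u') / 2880 := by
  have hunique : UniqueDiffOn ℝ (Icc (0:ℝ) 1) := uniqueDiffOn_Icc one_pos
  set g : ℕ → ℝ → ℝ := fun k => iteratedDerivWithin k f (Icc 0 1) with hgdef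
  -- continuity of the iterated derivatives
  have hcont : ∀ k : ℕ, k ≤ 4 → ContinuousOn (g k) (Icc 0 1) := fun k hk =>
    hf.continuousOn_iteratedDerivWithin (by exact_mod_cast hk) hunique
  -- derivatives of iterated derivatives at interior points
  have hderiv : ∀ k : ℕ, k < 4 → ∀ x ∈ Ioo (0:ℝ) 1, HasDerivAt (g k) (g (k+1) x) x := by
    intro k hk x hx
    have hd : DifferentiableOn ℝ (g k) (Icc 0 1) :=
      hf.differentiableOn_iteratedDerivWithin (by exact_mod_cast hk) hunique
    have hxI : x ∈ Icc (0:ℝ) 1 := Ioo_subset_Icc_self hx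
    have hw : HasDerivWithinAt (g k) (derivWithin (g k) (Icc 0 1) x) (Icc 0 1) x :=
      (hd x hxI).hasDerivWithinAt
    have hval : g (k+1) x = derivWithin (g k) (Icc 0 1) x :=
      congrFun iteratedDerivWithin_succ x
    rw [hval]
    exact hw.hasDerivAt (Icc_mem_nhds hx.1 hx.2)
  -- derivative of `f` itself at interior points
  have hdf : ∀ x ∈ Ioo (0:ℝ) 1, HasDerivAt f (g 1 x) x := by
    intro x hx
    have h0 : g 0 = f := by funext y; simp [hgdef]
    have := hderiv 0 (by norm_num) x hx
    rwa [h0] at this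
  have hfc : ContinuousOn f (Icc (0:ℝ) 1) := hf.continuousOn
  -- the primitive
  set Φ : ℝ → ℝ := fun x => ∫ t in (0:ℝ)..x, f t with hΦdef
  have hΦcont : ContinuousOn Φ (Icc (0:ℝ) 1) := by
    have hint : MeasureTheory.IntegrableOn f (Set.uIcc (0:ℝ) 1) MeasureTheory.volume := by
      rw [uIcc_of_le zero_le_one]; exact hfc.integrableOn_Icc
    have hcp := continuousOn_primitive_interval hint
    rwa [uIcc_of_le zero_le_one] at hcp
  have hΦderiv : ∀ x ∈ Ioo (0:ℝ) 1, HasDerivAt Φ (f x) x := by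
    intro x hx
    have hxI : x ∈ Icc (0:ℝ) 1 := Ioo_subset_Icc_self hx
    have hint : IntervalIntegrable f MeasureTheory.volume 0 x := by
      apply ContinuousOn.intervalIntegrable
      apply hfc.mono
      rw [uIcc_of_le hx.1.le]
      exact Icc_subset_Icc le_rfl hxI.2
    have hmeas : StronglyMeasurableAtFilter f (nhds x) MeasureTheory.volume :=
      (hfc.mono Ioo_subset_Icc_self).stronglyMeasurableAtFilter isOpen_Ioo x hx
    have hcx : ContinuousAt f x := (hfc x hxI).continuousAt (Icc_mem_nhds hx.1 hx.2)
    exact intervalIntegral.integral_hasDerivAt_right hint hmeas hcx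
  -- the auxiliary functions
  set F : ℝ → ℝ := fun h =>
    Φ (1/2 + h) - Φ (1/2 - h) - (h/3) * (f (1/2 - h) + 4 * f (1/2) + f (1/2 + h)) with hFdef
  set F1 : ℝ → ℝ := fun h =>
    (2/3) * (f (1/2 + h) + f (1/2 - h)) - (4/3) * f (1/2)
      - (h/3) * (g 1 (1/2 + h) - g 1 (1/2 - h)) with hF1def
  set F2 : ℝ → ℝ := fun h =>
    (1/3) * (g 1 (1/2 + h) - g 1 (1/2 - h))
      - (h/3) * (g 2 (1/2 + h) + g 2 (1/2 - h)) with hF2def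
  set F3 : ℝ → ℝ := fun h =>
    -(h/3) * (g 3 (1/2 + h) - g 3 (1/2 - h)) with hF3def
  have hmap_p : ∀ h ∈ Icc (0:ℝ) (1/2), (1/2 + h) ∈ Icc (0:ℝ) 1 := by
    intro h hh; constructor <;> [linarith [hh.1]; linarith [hh.2]]
  have hmap_m : ∀ h ∈ Icc (0:ℝ) (1/2), (1/2 - h) ∈ Icc (0:ℝ) 1 := by
    intro h hh; constructor <;> [linarith [hh.2]; linarith [hh.1]]
  have hmem_p : ∀ h ∈ Ioo (0:ℝ) (1/2), (1/2 + h) ∈ Ioo (0:ℝ) 1 := by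
    intro h hh; constructor <;> [linarith [hh.1]; linarith [hh.2]]
  have hmem_m : ∀ h ∈ Ioo (0:ℝ) (1/2), (1/2 - h) ∈ Ioo (0:ℝ) 1 := by
    intro h hh; constructor <;> [linarith [hh.2]; linarith [hh.1]]
  have hcp : Continuous (fun h : ℝ => 1/2 + h) := continuous_const.add continuous_id
  have hcm : Continuous (fun h : ℝ => 1/2 - h) := continuous_const.sub continuous_id
  -- compositions : continuity on Icc 0 (1/2)
  have compc : ∀ (u : ℝ → ℝ), ContinuousOn u (Icc (0:ℝ) 1) →
      ContinuousOn (fun h => u (1/2 + h)) (Icc (0:ℝ) (1/2)) ∧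
      ContinuousOn (fun h => u (1/2 - h)) (Icc (0:ℝ) (1/2)) := by
    intro u hu
    exact ⟨hu.comp hcp.continuousOn hmap_p, hu.comp hcm.continuousOn hmap_m⟩
  -- compositions : derivatives on Ioo 0 (1/2)
  have compd : ∀ (u u' : ℝ → ℝ), (∀ x ∈ Ioo (0:ℝ) 1, HasDerivAt u (u' x) x) →
      ∀ h ∈ Ioo (0:ℝ) (1/2),
        HasDerivAt (fun h => u (1/2 + h)) (u' (1/2 + h)) h ∧
        HasDerivAt (fun h => u (1/2 - h)) (-u' (1/2 - h)) h := by
    intro u u' hu h hh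
    constructor
    · have := (hu _ (hmem_p h hh)).comp h ((hasDerivAt_id h).const_add (1/2))
      simpa [Function.comp_def] using this
    · have := (hu _ (hmem_m h hh)).comp h ((hasDerivAt_id h).const_sub (1/2))
      simpa [Function.comp_def] using this
  -- derivative of F
  have hFd : ∀ h ∈ Ioo (0:ℝ) (1/2), HasDerivAt F (F1 h) h := by
    intro h hh
    obtain ⟨H1, H2⟩ := compd Φ f hΦderiv h hh
    obtain ⟨H3, H4⟩ := compd f (g 1) hdf h hh
    have hu : HasDerivAt (fun h : ℝ => h/3) (1/3) h := by
      simpa using (hasDerivAt_id h).div_const 3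
    have hD : HasDerivAt F
        (f (1/2 + h) - (-f (1/2 - h)) -
          ((1/3) * (f (1/2 - h) + 4 * f (1/2) + f (1/2 + h)) +
            (h/3) * (-g 1 (1/2 - h) + g 1 (1/2 + h)))) h :=
      (H1.sub H2).sub (hu.mul ((H4.add_const _).add H3))
    have heq : F1 h = f (1/2 + h) - (-f (1/2 - h)) -
          ((1/3) * (f (1/2 - h) + 4 * f (1/2) + f (1/2 + h)) +
            (h/3) * (-g 1 (1/2 - h) + g 1 (1/2 + h))) := by
      simp only [hF1def]; ring
    rwa [heq]
  -- derivative of F1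
  have hF1d : ∀ h ∈ Ioo (0:ℝ) (1/2), HasDerivAt F1 (F2 h) h := by
    intro h hh
    obtain ⟨H3, H4⟩ := compd f (g 1) hdf h hh
    obtain ⟨H5, H6⟩ := compd (g 1) (g 2) (hderiv 1 (by norm_num)) h hh
    have hu : HasDerivAt (fun h : ℝ => h/3) (1/3) h := by
      simpa using (hasDerivAt_id h).div_const 3
    have hD : HasDerivAt F1
        ((2/3) * (g 1 (1/2 + h) + -g 1 (1/2 - h)) - 0 -
          ((1/3) * (g 1 (1/2 + h) - g 1 (1/2 - h)) +
            (h/3) * (g 2 (1/2 + h) - (-g 2 (1/2 - h))))) h :=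
      (((H3.add H4).const_mul _).sub (hasDerivAt_const _ _)).sub (hu.mul (H5.sub H6))
    have heq : F2 h = (2/3) * (g 1 (1/2 + h) + -g 1 (1/2 - h)) - 0 -
          ((1/3) * (g 1 (1/2 + h) - g 1 (1/2 - h)) +
            (h/3) * (g 2 (1/2 + h) - (-g 2 (1/2 - h)))) := by
      simp only [hF2def]; ring
    rwa [heq]
  -- derivative of F2
  have hF2d : ∀ h ∈ Ioo (0:ℝ) (1/2), HasDerivAt F2 (F3 h) h := by
    intro h hh
    obtain ⟨H5, H6⟩ := compd (g 1) (g 2) (hderiv 1 (by norm_num)) h hh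
    obtain ⟨H7, H8⟩ := compd (g 2) (g 3) (hderiv 2 (by norm_num)) h hh
    have hu : HasDerivAt (fun h : ℝ => h/3) (1/3) h := by
      simpa using (hasDerivAt_id h).div_const 3
    have hD : HasDerivAt F2
        ((1/3) * (g 2 (1/2 + h) - (-g 2 (1/2 - h))) -
          ((1/3) * (g 2 (1/2 + h) + g 2 (1/2 - h)) +
            (h/3) * (g 3 (1/2 + h) + -g 3 (1/2 - h)))) h :=
      ((H5.sub H6).const_mul _).sub (hu.mul (H7.add H8))
    have heq : F3 h = (1/3) * (g 2 (1/2 + h) - (-g 2 (1/2 - h))) -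
          ((1/3) * (g 2 (1/2 + h) + g 2 (1/2 - h)) +
            (h/3) * (g 3 (1/2 + h) + -g 3 (1/2 - h))) := by
      simp only [hF3def]; ring
    rwa [heq]
  -- continuity of F, F1, F2 on Icc 0 (1/2)
  have hFc : ContinuousOn F (Icc (0:ℝ) (1/2)) := by
    obtain ⟨c1, c2⟩ := compc Φ hΦcont
    obtain ⟨c3, c4⟩ := compc f hfc
    exact (c1.sub c2).sub ((continuous_id.div_const 3).continuousOn.mul
      ((c4.add continuousOn_const).add c3))
  have hF1c : ContinuousOn F1 (Icc (0:ℝ) (1/2)) := by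
    obtain ⟨c3, c4⟩ := compc f hfc
    obtain ⟨c5, c6⟩ := compc (g 1) (hcont 1 (by norm_num))
    exact ((continuousOn_const.mul (c3.add c4)).sub continuousOn_const).sub
      ((continuous_id.div_const 3).continuousOn.mul (c5.sub c6))
  have hF2c : ContinuousOn F2 (Icc (0:ℝ) (1/2)) := by
    obtain ⟨c5, c6⟩ := compc (g 1) (hcont 1 (by norm_num))
    obtain ⟨c7, c8⟩ := compc (g 2) (hcont 2 (by norm_num))
    exact (continuousOn_const.mul (c5.sub c6)).sub
      ((continuous_id.div_const 3).continuousOn.mul (c7.add c8))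
  -- the comparison function
  set G : ℝ → ℝ := fun h => h^5 with hGdef
  set G1 : ℝ → ℝ := fun h => 5*h^4 with hG1def
  set G2 : ℝ → ℝ := fun h => 20*h^3 with hG2def
  set G3 : ℝ → ℝ := fun h => 60*h^2 with hG3def
  have hGd : ∀ h : ℝ, HasDerivAt G (G1 h) h := by
    intro h
    have hD := hasDerivAt_pow 5 h
    have heq : G1 h = ((5:ℕ):ℝ) * h ^ (5 - 1) := by
      simp only [hG1def]; push_cast; ring
    rw [heq]; exact hD
  have hG1d : ∀ h : ℝ, HasDerivAt G1 (G2 h) h := by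
    intro h
    have hD := (hasDerivAt_pow 4 h).const_mul (5:ℝ)
    have heq : G2 h = 5 * (((4:ℕ):ℝ) * h ^ (4 - 1)) := by
      simp only [hG2def]; push_cast; ring
    rw [heq]; exact hD
  have hG2d : ∀ h : ℝ, HasDerivAt G2 (G3 h) h := by
    intro h
    have hD := (hasDerivAt_pow 3 h).const_mul (20:ℝ)
    have heq : G3 h = 20 * (((3:ℕ):ℝ) * h ^ (3 - 1)) := by
      simp only [hG3def]; push_cast; ring
    rw [heq]; exact hD
  -- the error
  set E : ℝ := (∫ u in (0:ℝ)..1, f u) - (1 / 6) * (f 0 + 4 * f (1 / 2) + f 1) with hEdef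
  have hF0 : F 0 = 0 := by
    simp only [hFdef]; norm_num
  have hFhalf : F (1/2) = E := by
    simp only [hFdef, hEdef, hΦdef]
    norm_num [intervalIntegral.integral_same]
    try ring
  have hF10 : F1 0 = 0 := by
    simp only [hF1def]; norm_num
    try ring
  have hF20 : F2 0 = 0 := by
    simp only [hF2def]; norm_num
  -- Step 1 : Cauchy MVT on [0, 1/2]
  obtain ⟨c1, hc1, e1⟩ := exists_ratio_hasDerivAt_eq_ratio_slope F F1 (by norm_num : (0:ℝ) < 1/2)
    hFc hFd G G1 (by fun_prop) (fun x _ => hGd x)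
  -- Step 2 : Cauchy MVT on [0, c1]
  have hc1sub : Icc (0:ℝ) c1 ⊆ Icc (0:ℝ) (1/2) := Icc_subset_Icc le_rfl hc1.2.le
  obtain ⟨c2, hc2, e2⟩ := exists_ratio_hasDerivAt_eq_ratio_slope F1 F2 hc1.1
    (hF1c.mono hc1sub) (fun x hx => hF1d x ⟨hx.1, hx.2.trans hc1.2⟩)
    G1 G2 (by fun_prop) (fun x _ => hG1d x)
  -- Step 3 : Cauchy MVT on [0, c2]
  have hc2sub : Icc (0:ℝ) c2 ⊆ Icc (0:ℝ) (1/2) := Icc_subset_Icc le_rfl (hc2.2.trans hc1.2).le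
  obtain ⟨c3, hc3, e3⟩ := exists_ratio_hasDerivAt_eq_ratio_slope F2 F3 hc2.1
    (hF2c.mono hc2sub) (fun x hx => hF2d x ⟨hx.1, (hx.2.trans hc2.2).trans hc1.2⟩)
    G2 G3 (by fun_prop) (fun x _ => hG2d x)
  have hc3half : c3 < 1/2 := (hc3.2.trans hc2.2).trans hc1.2
  have hc3pos : 0 < c3 := hc3.1
  -- Step 4 : Lagrange MVT for g 3 on [1/2 - c3, 1/2 + c3]
  have hab : (1/2 - c3 : ℝ) < 1/2 + c3 := by linarith
  have hsub : Icc (1/2 - c3 : ℝ) (1/2 + c3) ⊆ Icc 0 1 := by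
    apply Icc_subset_Icc <;> linarith
  obtain ⟨ξ, hξ, e4⟩ := exists_hasDerivAt_eq_slope (g 3) (g 4) hab
    ((hcont 3 (by norm_num)).mono hsub)
    (fun x hx => hderiv 3 (by norm_num) x ⟨by linarith [hx.1], by linarith [hx.2]⟩)
  refine ⟨ξ, hsub (Ioo_subset_Icc_self hξ), ?_⟩
  -- clean up the four identities
  have hc1ne : c1 ≠ 0 := ne_of_gt hc1.1
  have hc2ne : c2 ≠ 0 := ne_of_gt hc2.1
  have hc3ne : c3 ≠ 0 := ne_of_gt hc3pos
  rw [hFhalf, hF0] at e1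
  rw [hF10] at e2
  rw [hF20] at e3
  simp only [hGdef, hG1def, hG2def, hG3def] at e1 e2 e3
  have q1 : F1 c1 = 160 * E * c1^4 := by linear_combination 32 * e1
  have q2 : F2 c2 = 640 * E * c2^3 := by
    have h5 : (5:ℝ) * c1^4 ≠ 0 := by positivity
    apply mul_left_cancel₀ h5
    linear_combination e2 + 20 * c2^3 * q1
  have q3 : F3 c3 = 1920 * E * c3^2 := by
    have h20 : (20:ℝ) * c2^3 ≠ 0 := by positivity
    apply mul_left_cancel₀ h20
    linear_combination e3 + 60 * c3^2 * q2
  simp only [hF3def] at q3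
  -- the Lagrange MVT identity
  have hξval : g 3 (1/2 + c3) - g 3 (1/2 - c3) = 2 * c3 * g 4 ξ := by
    have hne : ((1/2 + c3) - (1/2 - c3) : ℝ) ≠ 0 := by
      intro h; apply hc3ne; linarith
    rw [eq_div_iff hne] at e4
    linear_combination -e4
  rw [hξval] at q3
  -- conclude
  have q4 : c3^2 * E = c3^2 * (-(g 4 ξ) / 2880) := by
    linear_combination (-(1:ℝ)/1920) * q3
  exact mul_left_cancel₀ (pow_ne_zero 2 hc3ne) q4
end
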